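/- Let k ≥ 2, let M ∈ GL₂(ℤ/4ℤ), and let M' ∈ GL₂(ℤ/2^kℤ) be any lift of M (i.e., M' reduces to M modulo 4). Then the fraction of the image of M' − I lying in V₀₀ is the same at level k as at level 2: |im(M' − I) ∩ V₀₀(k)| · |im(M − I)| = |im(M − I) ∩ V₀₀(2)| · |im(M' − I)|. -/

import Mathlib

open Matrix

/-- AGL₂ over ℤ/mℤ, realized as the subgroup of GL₃ of matrices whose bottom row is (0, 0, 1). -/
def agl (m : ℕ) : Subgroup (GL (Fin 3) (ZMod m)) where
  carrier := {g | ∀ j : Fin 3,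
    (g : Matrix (Fin 3) (Fin 3) (ZMod m)) 2 j = (1 : Matrix (Fin 3) (Fin 3) (ZMod m)) 2 j}
  one_mem' := fun _ => rfl
  mul_mem' := by
    intro a b ha hb j
    simp only [Units.val_mul, Matrix.mul_apply]
    calc ∑ k, (a : Matrix (Fin 3) (Fin 3) (ZMod m)) 2 k *
          (b : Matrix (Fin 3) (Fin 3) (ZMod m)) k j
        = ∑ k, (1 : Matrix (Fin 3) (Fin 3) (ZMod m)) 2 k *
            (b : Matrix (Fin 3) (Fin 3) (ZMod m)) k j := by
          exact Finset.sum_congr rfl fun k _ => by rw [ha k]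
      _ = (b : Matrix (Fin 3) (Fin 3) (ZMod m)) 2 j := by
          simp [Matrix.one_apply, ite_mul]
      _ = (1 : Matrix (Fin 3) (Fin 3) (ZMod m)) 2 j := hb j
  inv_mem' := by
    intro a ha j
    have key : ((a * a⁻¹ : GL (Fin 3) (ZMod m)) : Matrix (Fin 3) (Fin 3) (ZMod m)) 2 j =
        ((a⁻¹ : GL (Fin 3) (ZMod m)) : Matrix (Fin 3) (Fin 3) (ZMod m)) 2 j := by
      simp only [Units.val_mul, Matrix.mul_apply]
      calc ∑ k, (a : Matrix (Fin 3) (Fin 3) (ZMod m)) 2 k *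
            ((a⁻¹ : GL (Fin 3) (ZMod m)) : Matrix (Fin 3) (Fin 3) (ZMod m)) k j
          = ∑ k, (1 : Matrix (Fin 3) (Fin 3) (ZMod m)) 2 k *
              ((a⁻¹ : GL (Fin 3) (ZMod m)) : Matrix (Fin 3) (Fin 3) (ZMod m)) k j := by
            exact Finset.sum_congr rfl fun k _ => by rw [ha k]
        _ = _ := by simp [Matrix.one_apply, ite_mul]
    rw [show (a * a⁻¹ : GL (Fin 3) (ZMod m)) = 1 from mul_inv_cancel a] at key
    exact key.symm

/-- Reduction homomorphism on GL₃ induced by the ring map ℤ/nℤ → ℤ/mℤ. -/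
def redGL {m n : ℕ} (h : m ∣ n) : GL (Fin 3) (ZMod n) →* GL (Fin 3) (ZMod m) :=
  Units.map (RingHom.toMonoidHom (RingHom.mapMatrix (ZMod.castHom h (ZMod m))))

lemma redGL_mem {m n : ℕ} (h : m ∣ n) {g : GL (Fin 3) (ZMod n)} (hg : g ∈ agl n) :
    redGL h g ∈ agl m := by
  intro j
  have : ((redGL h g : GL (Fin 3) (ZMod m)) : Matrix (Fin 3) (Fin 3) (ZMod m)) 2 j =
      ZMod.castHom h (ZMod m) ((g : Matrix (Fin 3) (Fin 3) (ZMod n)) 2 j) := rfl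
  rw [this, hg j, Matrix.one_apply, apply_ite (ZMod.castHom h (ZMod m)), _root_.map_one, _root_.map_zero,
    Matrix.one_apply]

/-- Reduction homomorphism AGL₂(ℤ/nℤ) → AGL₂(ℤ/mℤ). -/
def red {m n : ℕ} (h : m ∣ n) : ↥(agl n) →* ↥(agl m) :=
  MonoidHom.codRestrict ((redGL h).comp (agl n).subtype) (agl m)
    (fun g => redGL_mem h g.2)

/-- A subgroup of AGL₂(ℤ/2^kℤ) is kinetic if it surjects onto GL₂(ℤ/2^kℤ) via the linear-part
projection and onto AGL₂(ℤ/2ℤ) via reduction. -/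
def Kinetic {k : ℕ} (h2 : (2 : ℕ) ∣ 2 ^ k) (G : Subgroup ↥(agl (2 ^ k))) : Prop :=
  (∀ M : GL (Fin 2) (ZMod (2 ^ k)), ∃ g ∈ G, ∀ i j : Fin 2,
      ((g : GL (Fin 3) (ZMod (2 ^ k))) : Matrix (Fin 3) (Fin 3) (ZMod (2 ^ k)))
        i.castSucc j.castSucc = (M : Matrix (Fin 2) (Fin 2) (ZMod (2 ^ k))) i j) ∧
  (∀ t : ↥(agl 2), ∃ g ∈ G, red h2 g = t)

/-- The first generator of H₂: the pair ((1,2), [[2,1],[3,0]]). -/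
def genA : GL (Fin 3) (ZMod 4) :=
  ⟨!![2, 1, 1; 3, 0, 2; 0, 0, 1], !![0, 3, 2; 1, 2, 3; 0, 0, 1], by decide, by decide⟩

/-- The second generator of H₂: the pair ((3,3), [[2,3],[1,3]]). -/
def genB : GL (Fin 3) (ZMod 4) :=
  ⟨!![2, 3, 3; 1, 3, 3; 0, 0, 1], !![1, 3, 0; 1, 2, 3; 0, 0, 1], by decide, by decide⟩

lemma genA_mem : genA ∈ agl 4 := by
  show ∀ j : Fin 3, (genA : Matrix (Fin 3) (Fin 3) (ZMod 4)) 2 j =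
    (1 : Matrix (Fin 3) (Fin 3) (ZMod 4)) 2 j
  decide

lemma genB_mem : genB ∈ agl 4 := by
  show ∀ j : Fin 3, (genB : Matrix (Fin 3) (Fin 3) (ZMod 4)) 2 j =
    (1 : Matrix (Fin 3) (Fin 3) (ZMod 4)) 2 j
  decide

/-- The subgroup H₂ of AGL₂(ℤ/4ℤ). -/
def H2 : Subgroup ↥(agl 4) :=
  Subgroup.closure {⟨genA, genA_mem⟩, ⟨genB, genB_mem⟩}

/-- The subgroup H_k of AGL₂(ℤ/2^kℤ), the preimage of H₂ under reduction mod 4. -/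
def Hk {k : ℕ} (h4 : (4 : ℕ) ∣ 2 ^ k) : Subgroup ↥(agl (2 ^ k)) :=
  Subgroup.comap (red h4) H2

open Finset in
lemma fiber_count {G H : Type*} [AddCommGroup G] [AddCommGroup H] [Fintype G] [Fintype H]
    [DecidableEq G] [DecidableEq H]
    (f : G →+ H) (A : AddSubgroup G) (T : Set H) (hT : T ⊆ f '' (A : Set G)) :
    ((A : Set G) ∩ f ⁻¹' T).ncard = T.ncard * ((A : Set G) ∩ f ⁻¹' {0}).ncard := by
  classical
  set c := ((A : Set G) ∩ f ⁻¹' {0}).ncard with hc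
  set s : Finset G := univ.filter (fun x => x ∈ A ∧ f x ∈ T) with hs
  set t : Finset H := univ.filter (fun b => b ∈ T) with ht
  have hsset : ((A : Set G) ∩ f ⁻¹' T) = (s : Set G) := by
    ext x; simp [hs]
  have htset : T = (t : Set H) := by ext b; simp [ht]
  rw [hsset, htset, Set.ncard_coe_finset, Set.ncard_coe_finset]
  have hmap : ∀ x ∈ s, f x ∈ t := by
    intro x hx
    rw [hs, Finset.mem_filter] at hx
    rw [ht, Finset.mem_filter]
    exact ⟨Finset.mem_univ _, hx.2.2⟩
  rw [Finset.card_eq_sum_card_fiberwise hmap]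
  have key : ∀ b ∈ t, (s.filter (fun x => f x = b)).card = c := by
    intro b hb
    have hbT : b ∈ T := by simpa [ht] using hb
    obtain ⟨a₀, ha₀A, ha₀⟩ := hT hbT
    have himg : ((s.filter (fun x => f x = b)) : Set G)
        = (fun y => a₀ + y) '' ((A : Set G) ∩ f ⁻¹' {0}) := by
      ext x
      simp only [Finset.coe_filter, Set.mem_setOf_eq, Set.mem_image, Set.mem_inter_iff,
        Set.mem_preimage, Set.mem_singleton_iff, SetLike.mem_coe, hs, Finset.mem_filter,
        Finset.mem_univ, true_and]
      constructor
      · rintro ⟨⟨hxA, -⟩, hfx⟩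
        exact ⟨x - a₀, ⟨sub_mem hxA ha₀A, by simp [map_sub, hfx, ha₀]⟩, by abel⟩
      · rintro ⟨y, ⟨hyA, hy0⟩, rfl⟩
        refine ⟨⟨add_mem ha₀A hyA, ?_⟩, ?_⟩ <;> simp [map_add, hy0, ha₀, hbT]
    have := congrArg Set.ncard himg
    rwa [Set.ncard_coe_finset, Set.ncard_image_of_injective _ (add_right_injective a₀),
      ← hc] at this
  rw [Finset.sum_congr rfl key, Finset.sum_const, smul_eq_mul]

/-- The fraction of the image of M′ − I lying in V₀₀ is the same at level k as at level 2,
for any lift M′ ∈ GL₂(ℤ/2^kℤ) of M ∈ GL₂(ℤ/4ℤ). -/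
theorem lift_fraction_eq (k : ℕ) (hk : 2 ≤ k) (M : GL (Fin 2) (ZMod 4))
    (M' : GL (Fin 2) (ZMod (2 ^ k)))
    (hlift : ∀ i j : Fin 2,
      ZMod.castHom (show (4 : ℕ) ∣ 2 ^ k by exact (pow_dvd_pow 2 hk : 2 ^ 2 ∣ 2 ^ k)) (ZMod 4)
        ((M' : Matrix (Fin 2) (Fin 2) (ZMod (2 ^ k))) i j) =
      (M : Matrix (Fin 2) (Fin 2) (ZMod 4)) i j) :
    ∀ W' W : Set _,
      W' = Set.range (fun x : Fin 2 → ZMod (2 ^ k) =>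
        ((M' : Matrix (Fin 2) (Fin 2) (ZMod (2 ^ k))) - 1) *ᵥ x) →
      W = Set.range (fun x : Fin 2 → ZMod 4 =>
        ((M : Matrix (Fin 2) (Fin 2) (ZMod 4)) - 1) *ᵥ x) →
      (W' ∩ {v : Fin 2 → ZMod (2 ^ k) | ∀ i : Fin 2,
          ZMod.castHom (dvd_pow_self 2 (show k ≠ 0 by omega)) (ZMod 2) (v i) = 0}).ncard *
        W.ncard =
      (W ∩ {v : Fin 2 → ZMod 4 | ∀ i : Fin 2,
          ZMod.castHom (show (2 : ℕ) ∣ 4 by norm_num) (ZMod 2) (v i) = 0}).ncard *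
        W'.ncard := by
  classical
  intro W' W hW' hW
  have h4 : (4 : ℕ) ∣ 2 ^ k := by exact (pow_dvd_pow 2 hk : 2 ^ 2 ∣ 2 ^ k)
  have h24 : (2 : ℕ) ∣ 4 := by norm_num
  set N' : Matrix (Fin 2) (Fin 2) (ZMod (2 ^ k)) :=
    (M' : Matrix (Fin 2) (Fin 2) (ZMod (2 ^ k))) - 1 with hN'
  set N : Matrix (Fin 2) (Fin 2) (ZMod 4) :=
    (M : Matrix (Fin 2) (Fin 2) (ZMod 4)) - 1 with hN
  -- the reduction hom
  let f : (Fin 2 → ZMod (2 ^ k)) →+ (Fin 2 → ZMod 4) :=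
    { toFun := fun v i => ZMod.castHom h4 (ZMod 4) (v i)
      map_zero' := by funext i; simp
      map_add' := by
        intro a b; funext i
        exact map_add (ZMod.castHom h4 (ZMod 4)) (a i) (b i) }
  have hf : ∀ v i, f v i = ZMod.castHom h4 (ZMod 4) (v i) := fun _ _ => rfl
  -- entries match
  have hNmap : ∀ i j, ZMod.castHom h4 (ZMod 4) (N' i j) = N i j := by
    intro i j
    rw [hN', hN, Matrix.sub_apply, Matrix.sub_apply, map_sub, hlift]
    congr 1
    rw [Matrix.one_apply, Matrix.one_apply, apply_ite (ZMod.castHom h4 (ZMod 4)),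
      _root_.map_one, _root_.map_zero]
  have hcomm : ∀ x, f (N' *ᵥ x) = N *ᵥ (f x) := by
    intro x
    funext i
    rw [hf]
    simp only [Matrix.mulVec, dotProduct, map_sum]
    refine Finset.sum_congr rfl fun j _ => ?_
    rw [_root_.map_mul, hNmap, hf]
  -- A : W' as an AddSubgroup
  set A : AddSubgroup (Fin 2 → ZMod (2 ^ k)) :=
    (LinearMap.range (Matrix.mulVecLin N')).toAddSubgroup with hA
  have hAW' : (A : Set (Fin 2 → ZMod (2 ^ k))) = W' := by
    rw [hW', hA]
    ext v
    simp [LinearMap.mem_range, Matrix.mulVecLin_apply]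
  -- image of W' under f is W
  have himg : f '' W' = W := by
    rw [hW', hW]
    ext y
    constructor
    · rintro ⟨-, ⟨x, rfl⟩, rfl⟩
      exact ⟨f x, (hcomm x).symm⟩
    · rintro ⟨z, rfl⟩
      have hz : f (fun i => (ZMod.cast (z i) : ZMod (2 ^ k))) = z := by
        funext i
        exact ZMod.ringHom_map_cast (ZMod.castHom h4 (ZMod 4)) (z i)
      exact ⟨N' *ᵥ (fun i => (ZMod.cast (z i) : ZMod (2 ^ k))), ⟨_, rfl⟩,
        by rw [hcomm, hz]⟩
  -- V00 at level k is the preimage of V00 at level 2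
  set V : Set (Fin 2 → ZMod 4) :=
    {v | ∀ i : Fin 2, ZMod.castHom h24 (ZMod 2) (v i) = 0} with hV
  have hpre : {v : Fin 2 → ZMod (2 ^ k) | ∀ i : Fin 2,
      ZMod.castHom (dvd_pow_self 2 (show k ≠ 0 by omega)) (ZMod 2) (v i) = 0} = f ⁻¹' V := by
    ext v
    simp only [Set.mem_setOf_eq, Set.mem_preimage, hV, hf]
    constructor <;> intro h i <;>
      [rw [← RingHom.comp_apply, ZMod.castHom_comp]; rw [← h i, ← RingHom.comp_apply,
        ZMod.castHom_comp]] <;> exact h i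
  -- the two counting identities
  have hWsub : W ⊆ f '' (A : Set _) := by rw [hAW', himg]
  have eq1 : ((A : Set _) ∩ f ⁻¹' (W ∩ V)).ncard
      = (W ∩ V).ncard * ((A : Set _) ∩ f ⁻¹' {0}).ncard :=
    fiber_count f A (W ∩ V) (fun x hx => hWsub hx.1)
  have eq2 : ((A : Set _) ∩ f ⁻¹' W).ncard
      = W.ncard * ((A : Set _) ∩ f ⁻¹' {0}).ncard :=
    fiber_count f A W hWsub
  have hsub : W' ⊆ f ⁻¹' W := by
    intro x hx
    rw [← himg]
    exact ⟨x, hx, rfl⟩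
  have hW'eq : (A : Set _) ∩ f ⁻¹' W = W' := by
    rw [hAW']
    exact Set.inter_eq_self_of_subset_left hsub
  have hLHSeq : W' ∩ {v : Fin 2 → ZMod (2 ^ k) | ∀ i : Fin 2,
      ZMod.castHom (dvd_pow_self 2 (show k ≠ 0 by omega)) (ZMod 2) (v i) = 0}
      = (A : Set _) ∩ f ⁻¹' (W ∩ V) := by
    rw [hpre, Set.preimage_inter, hAW', ← Set.inter_assoc, ← hAW', hW'eq, hAW']
  rw [hLHSeq, eq1, show (W ∩ {v : Fin 2 → ZMod 4 | ∀ i : Fin 2,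
      ZMod.castHom (show (2 : ℕ) ∣ 4 by norm_num) (ZMod 2) (v i) = 0}) = W ∩ V from rfl,
    ← hW'eq, eq2]
  ring
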